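/- Let a > 0 be a real number, let η₀ be a nonnegative integer, and let p = (e^a − 1)/(e^a + 1). Then the function x ↦ max(x,0)·p·e^{−a·|x−η₀|} on ℤ is summable, and ∑_{x∈ℤ} max(x,0)·p·e^{−a·|x−η₀|} = η₀ + e^{−a·η₀}·e^{a}/(e^{2a} − 1). In particular, the expected number of dummy records E[η⁺] = E[max(η,0)] added per bin by the Laplace Protocol is a finite constant depending only on a and η₀ (hence only on ε, δ, ΔB). -/

import Mathlib

lemma Gform (q : ℝ) (hq : q ≠ 1) (N : ℕ) :
    (∑ i ∈ Finset.range (N+1), (i:ℝ) * q^(N-i))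
      = (q^(N+1) - (N+1)*q + N)/(1-q)^2 := by
  induction N with
  | zero => simp
  | succ N ih =>
    rw [Finset.sum_range_succ]
    have h1 : (∑ i ∈ Finset.range (N+1), (i:ℝ) * q^(N+1-i))
        = q * ∑ i ∈ Finset.range (N+1), (i:ℝ) * q^(N-i) := by
      rw [Finset.mul_sum]
      apply Finset.sum_congr rfl
      intro i hi
      have : N + 1 - i = (N - i) + 1 := by
        have := Finset.mem_range.mp hi; omega
      rw [this, pow_succ]; ring
    rw [h1, ih]
    simp only [Nat.sub_self, pow_zero, Nat.cast_add, Nat.cast_one]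
    have h2 : (1 - q) ≠ 0 := sub_ne_zero.mpr (Ne.symm hq)
    field_simp
    ring

/-- The expected number of dummy records E[max(η,0)] added per bin by the Laplace
Protocol is the finite constant `η₀ + e^{−a·η₀}·e^a/(e^{2a} − 1)`. -/
theorem laplace_expected_dummy (a : ℝ) (ha : 0 < a) (η₀ : ℕ) :
    Summable (fun x : ℤ =>
      max (x : ℝ) 0 * ((Real.exp a - 1) / (Real.exp a + 1)) *
        Real.exp (-a * |(x : ℝ) - (η₀ : ℝ)|)) ∧
    ∑' x : ℤ, max (x : ℝ) 0 * ((Real.exp a - 1) / (Real.exp a + 1)) *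
        Real.exp (-a * |(x : ℝ) - (η₀ : ℝ)|)
      = (η₀ : ℝ) + Real.exp (-a * (η₀ : ℝ)) * Real.exp a / (Real.exp (2 * a) - 1) := by
  set q : ℝ := Real.exp (-a) with hqdef
  set p : ℝ := (Real.exp a - 1) / (Real.exp a + 1) with hpdef
  set f : ℤ → ℝ := fun x : ℤ =>
      max (x : ℝ) 0 * p * Real.exp (-a * |(x : ℝ) - (η₀ : ℝ)|) with hfdef
  have hq0 : 0 < q := Real.exp_pos _
  have hq1 : q < 1 := by
    rw [hqdef]; exact Real.exp_lt_one_iff.mpr (by linarith)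
  have hqne1 : q ≠ 1 := ne_of_lt hq1
  have h1q : (1 - q) ≠ 0 := sub_ne_zero.mpr (Ne.symm hqne1)
  have h1q' : (1 + q) ≠ 0 := by positivity
  have hqnorm : ‖q‖ < 1 := by rw [Real.norm_eq_abs, abs_of_pos hq0]; exact hq1
  have hea : Real.exp a = q⁻¹ := by
    rw [hqdef, ← Real.exp_neg]; ring_nf
  have hexp : ∀ k : ℕ, Real.exp (-a * (k:ℝ)) = q ^ k := by
    intro k
    rw [hqdef, ← Real.exp_nat_mul]; ring_nf
  have hg : HasSum (fun n : ℕ => q ^ n) (1 - q)⁻¹ :=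
    hasSum_geometric_of_lt_one (le_of_lt hq0) hq1
  have hgm : HasSum (fun n : ℕ => (n : ℝ) * q ^ n) (q / (1 - q) ^ 2) :=
    hasSum_coe_mul_geometric_of_norm_lt_one hqnorm
  have htail : HasSum (fun n : ℕ => f ((n : ℤ) + (η₀ + 1 : ℕ)))
      (p * q * (q / (1 - q) ^ 2) + p * (η₀ + 1) * q * (1 - q)⁻¹) := by
    have H := (hgm.mul_left (p * q)).add (hg.mul_left (p * (η₀ + 1) * q))
    refine H.congr_fun fun n => ?_
    rw [hfdef]
    simp only
    have e1 : ((((n : ℤ) + (η₀ + 1 : ℕ)) : ℤ) : ℝ) = (n:ℝ) + η₀ + 1 := by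
      push_cast; ring
    rw [e1, show (n:ℝ) + η₀ + 1 - η₀ = ((n+1:ℕ):ℝ) by push_cast; ring,
      abs_of_nonneg (by positivity), hexp (n+1),
      max_eq_left (by positivity), pow_succ]
    push_cast; ring
  have hfin : (∑ i ∈ Finset.range (η₀ + 1), f (i : ℤ))
      = p * ((q^(η₀+1) - (η₀+1)*q + η₀)/(1-q)^2) := by
    rw [← Gform q hqne1 η₀, Finset.mul_sum]
    apply Finset.sum_congr rfl
    intro i hi
    have hile : i ≤ η₀ := by have := Finset.mem_range.mp hi; omega
    rw [hfdef]
    simp only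
    rw [show (((i:ℤ)):ℝ) - (η₀:ℝ) = -(((η₀ - i : ℕ)):ℝ) by push_cast [hile]; ring,
      abs_neg, abs_of_nonneg (by positivity), hexp,
      show max (((i:ℤ)):ℝ) 0 = (i:ℝ) by push_cast; exact max_eq_left (by positivity)]
    ring
  have hnat : HasSum (fun n : ℕ => f (n : ℤ))
      ((p * q * (q / (1 - q) ^ 2) + p * (η₀ + 1) * q * (1 - q)⁻¹)
        + ∑ i ∈ Finset.range (η₀ + 1), f (i : ℤ)) :=
    (hasSum_nat_add_iff (η₀ + 1)).mp htail
  have hneg : HasSum (fun n : ℕ => f (-((n : ℤ) + 1))) 0 := by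
    convert hasSum_zero with n
    rw [hfdef]
    simp only
    rw [show ((((-((n:ℤ)+1)) : ℤ)) : ℝ) = -((n:ℝ)+1) by push_cast; ring,
      max_eq_right (by nlinarith [Nat.cast_nonneg (α := ℝ) n])]
    ring
  have htot := hnat.of_nat_of_neg_add_one hneg
  rw [hfin] at htot
  have hcongr : ∀ x : ℤ, f x
      = max (x : ℝ) 0 * ((Real.exp a - 1) / (Real.exp a + 1)) *
          Real.exp (-a * |(x : ℝ) - (η₀ : ℝ)|) := by
    intro x; rw [hfdef]
  have htot' := htot.congr_fun hcongr
  refine ⟨⟨_, htot'⟩, ?_⟩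
  rw [htot'.tsum_eq, add_zero]
  have h2a : Real.exp (2 * a) = q⁻¹ * q⁻¹ := by
    rw [two_mul, Real.exp_add, hea]
  have h1q2 : 1 - q^2 ≠ 0 := by nlinarith
  have hp2 : p = (1 - q) / (1 + q) := by
    rw [hpdef, hea, div_eq_div_iff (by positivity) h1q']
    field_simp
  have hrhs : q ^ η₀ * q⁻¹ / (q⁻¹ * q⁻¹ - 1) = q ^ (η₀ + 1) / (1 - q ^ 2) := by
    rw [div_eq_div_iff _ h1q2]
    · rw [pow_succ]; field_simp; ring
    · intro h
      apply h1q2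
      have : q⁻¹ * q⁻¹ = 1 := by linarith [sub_eq_zero.mp h]
      have := congrArg (fun t => t * (q * q)) this
      simp only [one_mul] at this
      field_simp at this
      nlinarith
  rw [hexp η₀, hea, h2a, hrhs, hp2]
  field_simp
  ring
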